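/- Let Q be the cyclic quiver of type Ã_{n−1} with vertices 1, ..., n and arrows a_i from i to i+1 (indices modulo n), and let γ be any k^×-valued function on the edges of the double Q̄. Then the modified preprojective algebra Π^γ_Q(k), with relations γ_{a_i^*} a_i^* a_i − γ_{a_{i−1}} a_{i−1} a_{i−1}^* = 0 at each vertex i, is spanned as a k-vector space by the paths in Q̄ containing no subexpression a_i^* a_i; consequently h_{Π^γ_Q(k)}(t) ≤ (1 − Ct + t²)^{-1} termwise, where C is the adjacency matrix of Q̄. -/

import Mathlib

noncomputable section

open scoped DirectSum TensorProduct

/-- A finite quiver: finite sets of vertices and of edges, with head and tail maps.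
Multiple edges and self-loops are allowed. -/
structure FinQuiver where
  I : Type
  E : Type
  [fintypeI : Fintype I]
  [decEqI : DecidableEq I]
  [fintypeE : Fintype E]
  hd : E → I
  tl : E → I

attribute [instance] FinQuiver.fintypeI FinQuiver.decEqI FinQuiver.fintypeE

namespace FinQuiver

variable (Q : FinQuiver)

/-- Edges of the double quiver `Q̄`: for each edge `a` of `Q` (`Sum.inl a`),
a reverse edge `a*` (`Sum.inr a`). -/
abbrev DE := Q.E ⊕ Q.E

/-- Head (target) of an edge of the double quiver. -/
def dhd : Q.DE → Q.I := Sum.elim Q.hd Q.tl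

/-- Tail (source) of an edge of the double quiver. -/
def dtl : Q.DE → Q.I := Sum.elim Q.tl Q.hd

/-- The adjacency matrix `C` of the double quiver `Q̄` (with rational entries):
`C i j` is the number of edges of `Q̄` from `j` to `i`. -/
def adjC : Matrix Q.I Q.I ℚ :=
  Matrix.of fun i j => (Nat.card {b : Q.DE // Q.dhd b = i ∧ Q.dtl b = j} : ℚ)

/-- The number of edges between `i` and `j` in the underlying (undirected) graph of `Q`;
for `i = j` this is the number of self-loops at `i`. -/
def edgeCount (i j : Q.I) : ℕ :=
  Nat.card {a : Q.E // (Q.hd a = i ∧ Q.tl a = j) ∨ (Q.hd a = j ∧ Q.tl a = i)}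

/-- Two vertices are adjacent if some edge joins them (in either direction). -/
def Adjacent (i j : Q.I) : Prop :=
  ∃ a : Q.E, (Q.hd a = i ∧ Q.tl a = j) ∨ (Q.hd a = j ∧ Q.tl a = i)

/-- A quiver is connected if it is nonempty and any two vertices are joined by a walk
in the underlying graph. -/
def Connected : Prop :=
  Nonempty Q.I ∧ ∀ i j : Q.I, Relation.ReflTransGen Q.Adjacent i j

end FinQuiver

namespace FinQuiver

variable (k : Type) [CommRing k] (Q : FinQuiver)

/-- Generators of the path algebra of the double quiver: one idempotent generator for each
vertex, and one generator for each edge of the double quiver. -/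
abbrev Gen := Q.I ⊕ Q.DE

/-- The free algebra on the generators. -/
abbrev FA := FreeAlgebra k Q.Gen

/-- The vertex idempotent generator. -/
def eF (i : Q.I) : Q.FA k := FreeAlgebra.ι k (Sum.inl i)

/-- The edge generator. -/
def aF (b : Q.DE) : Q.FA k := FreeAlgebra.ι k (Sum.inr b)

/-- The preprojective relation at the vertex `i`:
`∑_{a ∈ Q, h(a) = i} a a* − ∑_{a ∈ Q, t(a) = i} a* a`. -/
def preprojector (i : Q.I) : Q.FA k :=
  (∑ a : {a : Q.E // Q.hd a = i}, Q.aF k (Sum.inl a.1) * Q.aF k (Sum.inr a.1)) -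
  (∑ a : {a : Q.E // Q.tl a = i}, Q.aF k (Sum.inr a.1) * Q.aF k (Sum.inl a.1))

/-- Relations defining the partial preprojective algebra `Π_{Q,J}`: the vertex generators are
orthogonal idempotents summing to `1`, each edge generator `b` of the double quiver satisfies
`b = e_{h(b)} b e_{t(b)}`, and the preprojective relation is imposed at every vertex
not belonging to `J`. -/
inductive PPRel (J : Set Q.I) : Q.FA k → Q.FA k → Prop
  | idem (i j : Q.I) : PPRel J (Q.eF k i * Q.eF k j) (if i = j then Q.eF k i else 0)
  | unit : PPRel J (∑ i : Q.I, Q.eF k i) 1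
  | comp (b : Q.DE) : PPRel J (Q.aF k b) (Q.eF k (Q.dhd b) * Q.aF k b * Q.eF k (Q.dtl b))
  | pre (i : Q.I) (h : i ∉ J) : PPRel J (Q.preprojector k i) 0

/-- The partial preprojective algebra `Π_{Q,J}(k)`, the quotient of the path algebra of the
double quiver `Q̄` by the preprojective relations imposed at the vertices not in `J`.
For `J = ∅` this is the preprojective algebra `Π_Q(k)`. -/
abbrev PPA (J : Set Q.I) := RingQuot (Q.PPRel k J)

/-- The quotient map from the free algebra onto `Π_{Q,J}(k)`. -/
def ppMk (J : Set Q.I) : Q.FA k →ₐ[k] Q.PPA k J := RingQuot.mkAlgHom k (Q.PPRel k J)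

/-- The product of a list of edge generators in the free algebra. -/
def wordF (l : List Q.DE) : Q.FA k := (l.map (Q.aF k)).prod

/-- The component `e_i Π_{Q,J}(k)[d] e_j` of the grading of `Π_{Q,J}(k)` in which the edges
have degree `1`: the span of (the images of) all paths of length `d` from `j` to `i`. -/
def ppPiece (J : Set Q.I) (d : ℕ) (i j : Q.I) : Submodule k (Q.PPA k J) :=
  Submodule.span k
    {x | ∃ l : List Q.DE, l.length = d ∧ x = Q.ppMk k J (Q.eF k i * Q.wordF k l * Q.eF k j)}

/-- The Hilbert series of `Π_{Q,J}(k)`, a matrix-valued power series: the `(i,j)` entry of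
the `d`-th coefficient is `dim_k e_i Π_{Q,J}(k)[d] e_j`. -/
def ppHilb (J : Set Q.I) : PowerSeries (Matrix Q.I Q.I ℚ) :=
  PowerSeries.mk fun d => Matrix.of fun i j => (Module.finrank k (Q.ppPiece k J d i j) : ℚ)

end FinQuiver

/-- The diagonal matrix `D_J` with `(D_J)_{ii} = 0` for `i ∈ J` and `(D_J)_{ii} = 1`
for `i ∉ J`. -/
def DJmat {ι : Type} (J : Set ι) : Matrix ι ι ℚ :=
  open scoped Classical in Matrix.of fun i j => if i = j ∧ i ∉ J then 1 else 0

namespace FinQuiver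

variable (k : Type) [CommRing k] (Q : FinQuiver) (J : Set Q.I)

/-- The edges of the double quiver which begin or end at a vertex of `I ∖ J`. -/
abbrev GamEdge := {b : Q.DE // Q.dhd b ∉ J ∨ Q.dtl b ∉ J}

/-- The modified preprojective relation at a vertex `i ∉ J`, with coefficients `γ`:
`∑_{a ∈ Q, h(a) = i} γ_a a a* − ∑_{a ∈ Q, t(a) = i} γ_{a*} a* a`. -/
def preprojectorGam (γ : Q.GamEdge J → kˣ) (i : Q.I) (hi : i ∉ J) : Q.FA k :=
  (∑ a : {a : Q.E // Q.hd a = i},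
      ((γ ⟨Sum.inl a.1, Or.inl (by
          rw [show Q.dhd (Sum.inl a.1) = Q.hd a.1 from rfl, a.2]; exact hi)⟩ : kˣ) : k) •
        (Q.aF k (Sum.inl a.1) * Q.aF k (Sum.inr a.1))) -
  (∑ a : {a : Q.E // Q.tl a = i},
      ((γ ⟨Sum.inr a.1, Or.inl (by
          rw [show Q.dhd (Sum.inr a.1) = Q.tl a.1 from rfl, a.2]; exact hi)⟩ : kˣ) : k) •
        (Q.aF k (Sum.inr a.1) * Q.aF k (Sum.inl a.1)))

/-- Relations defining the modified partial preprojective algebra `Π^γ_{Q,J}(k)`: the vertex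
generators are orthogonal idempotents summing to `1`, each edge generator `b` of the double
quiver satisfies `b = e_{h(b)} b e_{t(b)}`, and the modified preprojective relation is
imposed at every vertex not belonging to `J`. -/
inductive PPRelGam (γ : Q.GamEdge J → kˣ) : Q.FA k → Q.FA k → Prop
  | idem (i j : Q.I) : PPRelGam γ (Q.eF k i * Q.eF k j) (if i = j then Q.eF k i else 0)
  | unit : PPRelGam γ (∑ i : Q.I, Q.eF k i) 1
  | comp (b : Q.DE) : PPRelGam γ (Q.aF k b) (Q.eF k (Q.dhd b) * Q.aF k b * Q.eF k (Q.dtl b))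
  | pre (i : Q.I) (h : i ∉ J) : PPRelGam γ (Q.preprojectorGam k J γ i h) 0

/-- The modified partial preprojective algebra `Π^γ_{Q,J}(k)`. For `J = ∅` this is the
modified preprojective algebra `Π^γ_Q(k)`. -/
abbrev PPAGam (γ : Q.GamEdge J → kˣ) := RingQuot (Q.PPRelGam k J γ)

/-- The quotient map from the free algebra onto `Π^γ_{Q,J}(k)`. -/
def ppGamMk (γ : Q.GamEdge J → kˣ) : Q.FA k →ₐ[k] Q.PPAGam k J γ :=
  RingQuot.mkAlgHom k (Q.PPRelGam k J γ)

/-- The component `e_i Π^γ_{Q,J}(k)[d] e_j` of the grading of `Π^γ_{Q,J}(k)` in which the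
edges have degree `1`: the span of (the images of) all paths of length `d` from `j` to `i`. -/
def ppGamPiece (γ : Q.GamEdge J → kˣ) (d : ℕ) (i j : Q.I) :
    Submodule k (Q.PPAGam k J γ) :=
  Submodule.span k
    {x | ∃ l : List Q.DE, l.length = d ∧
      x = Q.ppGamMk k J γ (Q.eF k i * Q.wordF k l * Q.eF k j)}

/-- The Hilbert series of `Π^γ_{Q,J}(k)`, a matrix-valued power series: the `(i,j)` entry of
the `d`-th coefficient is `dim_k e_i Π^γ_{Q,J}(k)[d] e_j`. -/
def ppGamHilb (γ : Q.GamEdge J → kˣ) : PowerSeries (Matrix Q.I Q.I ℚ) :=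
  PowerSeries.mk fun d => Matrix.of fun i j =>
    (Module.finrank k (Q.ppGamPiece k J γ d i j) : ℚ)

end FinQuiver

/-- The cyclic quiver of type `Ã_{n−1}`: vertices `Fin n` and arrows `a_i` from `i` to
`i + 1` (indices modulo `n`). For `n = 1` this is one vertex with one loop. -/
def cycleQuiver (n : ℕ) [NeZero n] : FinQuiver where
  I := Fin n
  E := Fin n
  hd := fun i => i + 1
  tl := fun i => i

/-- A list of edges of the double quiver contains no subexpression `a_i* a_i`, i.e. no
edge `a_i*` (`Sum.inr i`) immediately followed by the edge `a_i` (`Sum.inl i`). -/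
def NoStarStep {n : ℕ} [NeZero n] (l : List ((cycleQuiver n).DE)) : Prop :=
  l.Chain' fun b c => ∀ m, b = Sum.inr m → c ≠ Sum.inl m

instance cqDecEq (n : ℕ) [NeZero n] (x : (cycleQuiver n).I) (y : Fin n) : Decidable (x = y) :=
  instDecidableEqFin n x y

lemma cq_eqI_iff (n : ℕ) [NeZero n] (x y : (cycleQuiver n).I) :
    @Eq (Fin n) x y ↔ @Eq (cycleQuiver n).I x y := Iff.rfl

section CyclicAux

variable (n : ℕ) [NeZero n]

/-- Boolean version of the no-star-step condition on an adjacent pair. -/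
def okB : (Fin n ⊕ Fin n) → (Fin n ⊕ Fin n) → Bool
  | Sum.inr m, Sum.inl m' => decide (m' ≠ m)
  | _, _ => true

lemma okB_iff (b c : (Fin n ⊕ Fin n)) :
    okB n b c = true ↔ ∀ m, b = Sum.inr m → c ≠ Sum.inl m := by
  cases b with
  | inl m => simp [okB]
  | inr m =>
    cases c with
    | inl m' => simp [okB]
    | inr m' => simp [okB]

/-- Boolean path-validity predicate: `pathB i j l` iff `l` is a path from `j` to `i`. -/
def pathB : Fin n → Fin n → List (Fin n ⊕ Fin n) → Bool
  | i, j, [] => decide (i = j)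
  | i, j, b :: l => decide ((cycleQuiver n).dhd b = i) && pathB ((cycleQuiver n).dtl b) j l

/-- Boolean version of `NoStarStep`. -/
def nsB : List (Fin n ⊕ Fin n) → Bool
  | [] => true
  | [_] => true
  | b :: c :: l => okB n b c && nsB (c :: l)

lemma nsB_iff (l : List (Fin n ⊕ Fin n)) : nsB n l = true ↔ NoStarStep l := by
  induction l with
  | nil => simp [nsB, NoStarStep, List.Chain']; exact List.IsChain.nil
  | cons b t ih =>
    cases t with
    | nil => simp [nsB, NoStarStep, List.Chain']; exact List.IsChain.singleton _
    | cons c t' =>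
      simp only [NoStarStep, List.Chain'] at ih ⊢
      erw [List.isChain_cons_cons]
      simp only [nsB, Bool.and_eq_true, okB_iff, ih]
      exact ⟨fun h => ⟨h.1, h.2⟩, fun h => ⟨h.1, h.2⟩⟩

/-- `allowedB forb b` : the edge `b` is permitted as the next step given that `forb`
records a possibly forbidden `inl`. -/
def allowedB : Option (Fin n) → (Fin n ⊕ Fin n) → Bool
  | none, _ => true
  | some m, b => decide (b ≠ Sum.inl m)

/-- After traversing edge `b`, which `inl` is forbidden next. -/
def nxt : (Fin n ⊕ Fin n) → Option (Fin n)
  | Sum.inl _ => none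
  | Sum.inr m => some m

/-- The finite set of no-star-step paths of length `d` from `j` to `i` not starting with
the forbidden edge. -/
def goodF : ℕ → Option (Fin n) → Fin n → Fin n → Finset (List (Fin n ⊕ Fin n))
  | 0, _, i, j => if i = j then {([] : List (Fin n ⊕ Fin n))} else ∅
  | d+1, forb, i, j =>
    Finset.univ.biUnion fun b : (Fin n ⊕ Fin n) =>
      if (cycleQuiver n).dhd b = i ∧ allowedB n forb b = true then
        (goodF d (nxt n b) ((cycleQuiver n).dtl b) j).image (b :: ·)
      else ∅

lemma card_goodF_succ (d : ℕ) (forb : Option (Fin n)) (i j : Fin n) :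
    (goodF n (d+1) forb i j).card =
      ∑ b : (Fin n ⊕ Fin n), if (cycleQuiver n).dhd b = i ∧ allowedB n forb b = true then
        (goodF n d (nxt n b) ((cycleQuiver n).dtl b) j).card else 0 := by
  rw [goodF, Finset.card_biUnion]
  · refine Finset.sum_congr rfl fun b _ => ?_
    split
    · exact Finset.card_image_of_injective _ (fun x y h => by injection h)
    · simp
  · intro b _ b' _ hbb'
    refine Finset.disjoint_left.2 fun l hl hl' => hbb' ?_
    beta_reduce at hl hl'
    split at hl
    · split at hl'
      · obtain ⟨t, _, rfl⟩ := Finset.mem_image.1 hl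
        obtain ⟨t', _, ht'⟩ := Finset.mem_image.1 hl'
        injection ht'.symm
      · simp at hl'
    · simp at hl

lemma mem_goodF : ∀ (l : List (Fin n ⊕ Fin n)) (d : ℕ) (forb : Option (Fin n)) (i j : Fin n),
    l.length = d → pathB n i j l = true → nsB n l = true →
    (∀ m, forb = some m → l.head? ≠ some (Sum.inl m)) → l ∈ goodF n d forb i j := by
  intro l
  induction l with
  | nil =>
    intro d forb i j hlen hp _ _
    subst hlen
    rw [pathB, decide_eq_true_iff] at hp
    simp [goodF, hp]
  | cons b t ih =>
    intro d forb i j hlen hp hns hhd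
    subst hlen
    rw [pathB, Bool.and_eq_true, decide_eq_true_iff] at hp
    rw [show (b :: t).length = t.length + 1 from rfl, goodF]
    refine Finset.mem_biUnion.2 ⟨b, Finset.mem_univ _, ?_⟩
    have hallow : allowedB n forb b = true := by
      cases forb with
      | none => rfl
      | some m =>
        have := hhd m rfl
        simp only [List.head?_cons, ne_eq, Option.some.injEq] at this
        simp [allowedB, this]
    rw [if_pos ⟨hp.1, hallow⟩]
    refine Finset.mem_image.2 ⟨t, ?_, rfl⟩
    refine ih _ _ _ _ rfl hp.2 ?_ ?_
    · cases t with
      | nil => rfl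
      | cons c t' =>
        rw [nsB, Bool.and_eq_true] at hns
        exact hns.2
    · intro m hm
      cases b with
      | inl m' => simp [nxt] at hm
      | inr m' =>
        rw [nxt, Option.some.injEq] at hm
        subst hm
        cases t with
        | nil => simp
        | cons c t' =>
          rw [nsB, Bool.and_eq_true] at hns
          have := (okB_iff n _ _).1 hns.1 m' rfl
          simpa using this

lemma card_goodF_none_eq (d : ℕ) (m : Fin n) (v j : Fin n) :
    ((goodF n (d+1) none v j).card : ℚ) =
      ((goodF n (d+1) (some m) v j).card : ℚ) +
      (if (cycleQuiver n).dhd (Sum.inl m) = v then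
        ((goodF n d none ((cycleQuiver n).dtl (Sum.inl m)) j).card : ℚ) else 0) := by
  rw [card_goodF_succ, card_goodF_succ]
  push_cast
  have point : ∀ b : (Fin n ⊕ Fin n),
      (if (cycleQuiver n).dhd b = v ∧ allowedB n none b = true then
        ((goodF n d (nxt n b) ((cycleQuiver n).dtl b) j).card : ℚ) else 0)
      = (if (cycleQuiver n).dhd b = v ∧ allowedB n (some m) b = true then
          ((goodF n d (nxt n b) ((cycleQuiver n).dtl b) j).card : ℚ) else 0)
        + (if b = Sum.inl m then
            (if (cycleQuiver n).dhd b = v then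
              ((goodF n d (nxt n b) ((cycleQuiver n).dtl b) j).card : ℚ) else 0) else 0) := by
    intro b
    by_cases hb : b = Sum.inl m
    · subst hb
      have h2 : ¬ (allowedB n (some m) (Sum.inl m) = true) := by simp [allowedB]
      by_cases hv : (cycleQuiver n).dhd (Sum.inl m : Fin n ⊕ Fin n) = v
      · simp [eq_true hv, h2, allowedB]
      · simp [hv, h2]
    · have hall : allowedB n (some m) b = true := by simp [allowedB, hb]
      simp [hall, hb, allowedB]
  rw [Finset.sum_congr rfl fun b _ => point b, Finset.sum_add_distrib,
    Finset.sum_ite_eq' Finset.univ (Sum.inl m)]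
  simp [nxt]
  rfl

/-- The counting matrix: `(CntM d) i j` is the number of no-star-step paths of length `d`
from `j` to `i`. -/
def CntM (d : ℕ) : Matrix (cycleQuiver n).I (cycleQuiver n).I ℚ :=
  Matrix.of fun i j => ((goodF n d none i j).card : ℚ)

lemma CntM_zero : CntM n 0 = 1 := by
  ext i j
  by_cases h : i = j <;> simp [CntM, goodF, h, Matrix.one_apply, cq_eqI_iff]

open scoped Classical in
lemma adjC_apply (i v : (cycleQuiver n).I) :
    (cycleQuiver n).adjC i v =
      ((Finset.univ.filter fun b : (Fin n ⊕ Fin n) =>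
        (cycleQuiver n).dhd b = i ∧ (cycleQuiver n).dtl b = v).card : ℚ) := by
  rw [FinQuiver.adjC, Matrix.of_apply, Nat.card_eq_fintype_card, Fintype.card_subtype]
  norm_cast
  congr

lemma CntM_one : CntM n 1 = (cycleQuiver n).adjC := by
  ext i j
  erw [CntM, Matrix.of_apply, adjC_apply, card_goodF_succ, Finset.card_filter]
  push_cast
  refine Finset.sum_congr rfl fun b _ => ?_
  have hall : allowedB n none b = true := rfl
  by_cases h1 : (cycleQuiver n).dhd b = i <;>
    by_cases h2 : (cycleQuiver n).dtl b = j <;>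
      simp [h1, h2, hall, goodF, cq_eqI_iff]

lemma regroup (F : Fin n → ℚ) (i : Fin n) :
    (∑ b : (Fin n ⊕ Fin n), if (cycleQuiver n).dhd b = i then F ((cycleQuiver n).dtl b) else 0) =
      ∑ v, (cycleQuiver n).adjC i v * F v := by
  have hv : ∀ v, (cycleQuiver n).adjC i v * F v =
      ∑ b : (Fin n ⊕ Fin n),
        if (cycleQuiver n).dhd b = i ∧ (cycleQuiver n).dtl b = v then F v else 0 := by
    intro v
    erw [adjC_apply, Finset.card_filter]
    push_cast
    rw [Finset.sum_mul]
    refine Finset.sum_congr rfl fun b _ => ?_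
    split_ifs <;> simp
  rw [Finset.sum_congr rfl fun v _ => hv v, Finset.sum_comm]
  refine Finset.sum_congr rfl fun b _ => ?_
  by_cases h : (cycleQuiver n).dhd b = i
  · simp only [eq_true h, true_and, if_true]
    rw [Finset.sum_eq_single ((cycleQuiver n).dtl b)]
    · simp
    · intro x _ hx
      exact if_neg (Ne.symm hx)
    · simp
  · simp [h]

lemma CntM_rec (d : ℕ) :
    CntM n (d+2) = (cycleQuiver n).adjC * CntM n (d+1) - CntM n d := by
  ext i j
  rw [Matrix.sub_apply, Matrix.mul_apply]
  erw [CntM, Matrix.of_apply, card_goodF_succ]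
  push_cast
  have key : ∀ b : (Fin n ⊕ Fin n),
      (if (cycleQuiver n).dhd b = i ∧ allowedB n none b = true then
        ((goodF n (d+1) (nxt n b) ((cycleQuiver n).dtl b) j).card : ℚ) else 0) =
      (if (cycleQuiver n).dhd b = i then
        ((goodF n (d+1) none ((cycleQuiver n).dtl b) j).card : ℚ) else 0)
      - (if b = (Sum.inr i : Fin n ⊕ Fin n) then ((goodF n d none i j).card : ℚ) else 0) := by
    intro b
    cases b with
    | inl m' => simp [allowedB, nxt]
    | inr m' =>
      by_cases hm : (cycleQuiver n).dhd (Sum.inr m' : Fin n ⊕ Fin n) = i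
      · have hmi : m' = i := hm
        subst hmi
        have h := card_goodF_none_eq n d m' ((cycleQuiver n).dtl (Sum.inr m' : Fin n ⊕ Fin n)) j
        have hc : (cycleQuiver n).dhd (Sum.inl m') =
            (cycleQuiver n).dtl (Sum.inr m' : Fin n ⊕ Fin n) := rfl
        rw [if_pos hc] at h
        have hd : (cycleQuiver n).dtl (Sum.inl m') = m' := rfl
        rw [hd] at h
        rw [if_pos (⟨hm, rfl⟩ : (cycleQuiver n).dhd (Sum.inr m' : Fin n ⊕ Fin n) = m' ∧
              allowedB n none (Sum.inr m') = true),
          if_pos hm, if_pos rfl,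
          show nxt n (Sum.inr m') = some m' from rfl]
        linarith [h]
      · have hne : ¬ (Sum.inr m' = (Sum.inr i : Fin n ⊕ Fin n)) := by
          intro hcon
          exact hm (by rw [hcon]; exact rfl)
        simp [hm, hne]
  rw [Finset.sum_congr rfl fun b _ => key b, Finset.sum_sub_distrib,
    Finset.sum_ite_eq' (Finset.univ : Finset (Fin n ⊕ Fin n)) (Sum.inr i : Fin n ⊕ Fin n)
      (fun _ => ((goodF n d none i j).card : ℚ))]
  erw [regroup n (fun v => ((goodF n (d+1) none v j).card : ℚ)) i]
  simp [CntM]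

/-- Count of `inl`s in a list. -/
def cntL (l : List (Fin n ⊕ Fin n)) : ℕ := l.countP (fun b => b.isLeft)

/-- The number of (inr, inl) inversions: the termination measure for the rewriting. -/
def mu : List (Fin n ⊕ Fin n) → ℕ
  | [] => 0
  | b :: l => (if b.isRight then cntL n l else 0) + mu l

lemma cntL_congr (p s : List (Fin n ⊕ Fin n)) (m m' : Fin n) :
    cntL n (p ++ Sum.inl m' :: Sum.inr m' :: s) = cntL n (p ++ Sum.inr m :: Sum.inl m :: s) := by
  simp [cntL, List.countP_append, List.countP_cons]

lemma mu_lt (p s : List (Fin n ⊕ Fin n)) (m m' : Fin n) :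
    mu n (p ++ Sum.inl m' :: Sum.inr m' :: s) < mu n (p ++ Sum.inr m :: Sum.inl m :: s) := by
  induction p with
  | nil =>
    simp only [List.nil_append, mu, cntL, List.countP_cons]
    simp [Sum.isRight, Sum.isLeft]
  | cons b p ih =>
    simp only [List.cons_append, mu, List.append_eq]
    rw [cntL_congr n p s m m']
    exact Nat.add_lt_add_left ih _

lemma decomp : ∀ l : List (Fin n ⊕ Fin n), ¬ (nsB n l = true) →
    ∃ p m s, l = p ++ Sum.inr m :: Sum.inl m :: s := by
  intro l
  induction l with
  | nil => exact fun h => absurd rfl h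
  | cons b t ih =>
    intro h
    cases t with
    | nil => exact absurd rfl h
    | cons c t' =>
      by_cases hok : okB n b c = true
      · have hns : ¬ (nsB n (c :: t') = true) := by
          intro hh
          exact h (by rw [nsB, Bool.and_eq_true]; exact ⟨hok, hh⟩)
        obtain ⟨p, m, s, hps⟩ := ih hns
        exact ⟨b :: p, m, s, by rw [List.cons_append, hps]⟩
      · rcases b with m | m
        · exact absurd rfl hok
        rcases c with m2 | m2
        · have hm2 : m2 = m := by simpa [okB] using hok
          exact ⟨[], m, t', by rw [hm2]; rfl⟩
        · exact absurd rfl hok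

/-- Coefficient relations for a right inverse of `1 - C A t + t²`. -/
lemma series_coeff_rels (A : Matrix (cycleQuiver n).I (cycleQuiver n).I ℚ)
    (S : PowerSeries (Matrix (cycleQuiver n).I (cycleQuiver n).I ℚ))
    (hS : (1 - PowerSeries.C A * PowerSeries.X
        + PowerSeries.C (1 : Matrix (cycleQuiver n).I (cycleQuiver n).I ℚ)
          * PowerSeries.X ^ 2) * S = 1) :
    PowerSeries.coeff 0 S = 1 ∧ PowerSeries.coeff 1 S = A ∧
    ∀ d, PowerSeries.coeff (d+2) S
      = A * PowerSeries.coeff (d+1) S - PowerSeries.coeff d S := by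
  have h' : S - PowerSeries.C A * (PowerSeries.X * S)
      + PowerSeries.C (1 : Matrix (cycleQuiver n).I (cycleQuiver n).I ℚ)
        * (PowerSeries.X * (PowerSeries.X * S)) = 1 := by
    rw [← hS]; noncomm_ring
  have hXS0 : PowerSeries.coeff 0 (PowerSeries.X * S) = 0 := by
    rw [PowerSeries.coeff_zero_eq_constantCoeff, map_mul]
    simp
  have hc0 : PowerSeries.coeff 0 S = 1 := by
    have h0 := congrArg (PowerSeries.coeff 0) h'
    rw [map_add, map_sub, PowerSeries.coeff_C_mul, PowerSeries.coeff_C_mul,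
      hXS0, PowerSeries.coeff_zero_eq_constantCoeff, map_mul] at h0
    simpa using h0
  refine ⟨hc0, ?_, ?_⟩
  · have h1 := congrArg (PowerSeries.coeff 1) h'
    rw [map_add, map_sub, PowerSeries.coeff_C_mul, PowerSeries.coeff_C_mul,
      PowerSeries.coeff_succ_X_mul, PowerSeries.coeff_succ_X_mul, hXS0,
      PowerSeries.coeff_one] at h1
    simp only [mul_zero, add_zero, if_neg (by norm_num : ¬ (1 : ℕ) = 0)] at h1
    have h1' := sub_eq_zero.mp h1
    rw [h1', hc0, mul_one]
  · intro d
    have h2 := congrArg (PowerSeries.coeff (d+2)) h'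
    rw [map_add, map_sub, PowerSeries.coeff_C_mul, PowerSeries.coeff_C_mul,
      PowerSeries.coeff_succ_X_mul, PowerSeries.coeff_succ_X_mul,
      PowerSeries.coeff_succ_X_mul, PowerSeries.coeff_one,
      if_neg (by omega : ¬ d + 2 = 0)] at h2
    rw [one_mul] at h2
    have := sub_eq_zero.mp (by linear_combination (norm := abel) h2 : PowerSeries.coeff (d+2) S
        - (A * PowerSeries.coeff (d+1) S - PowerSeries.coeff d S) = 0)
    exact this

lemma coeff_eq_CntM (S : PowerSeries (Matrix (cycleQuiver n).I (cycleQuiver n).I ℚ))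
    (hS : (1 - PowerSeries.C ((cycleQuiver n).adjC) * PowerSeries.X
        + PowerSeries.C (1 : Matrix (cycleQuiver n).I (cycleQuiver n).I ℚ)
          * PowerSeries.X ^ 2) * S = 1) :
    ∀ d, PowerSeries.coeff d S = CntM n d := by
  obtain ⟨h0, h1, hrec⟩ := series_coeff_rels n _ S hS
  refine Nat.twoStepInduction ?_ ?_ ?_
  · rw [h0, CntM_zero]
  · rw [h1, CntM_one]
  · intro d ih1 ih2
    rw [hrec d, ih1, ih2, CntM_rec]

end CyclicAux

section CyclicAlg

variable (k : Type) [Field k] (n : ℕ) [NeZero n] (γ : (cycleQuiver n).DE → kˣ)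

/-- The quotient map onto the modified preprojective algebra of the cyclic quiver. -/
def phim : (cycleQuiver n).FA k →ₐ[k] (cycleQuiver n).PPAGam k ∅ (fun b => γ b.1) :=
  (cycleQuiver n).ppGamMk k ∅ (fun b => γ b.1)

lemma phim_rel {x y : (cycleQuiver n).FA k}
    (h : (cycleQuiver n).PPRelGam k ∅ (fun b => γ b.1) x y) :
    phim k n γ x = phim k n γ y :=
  RingQuot.mkAlgHom_rel k h

lemma phim_ee (i j : (cycleQuiver n).I) :
    phim k n γ ((cycleQuiver n).eF k i) * phim k n γ ((cycleQuiver n).eF k j)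
      = if i = j then phim k n γ ((cycleQuiver n).eF k i) else 0 := by
  have h := phim_rel k n γ (FinQuiver.PPRelGam.idem i j)
  rw [map_mul, apply_ite (phim k n γ), map_zero] at h
  exact h

lemma phim_sum_e : (∑ i, phim k n γ ((cycleQuiver n).eF k i)) = 1 := by
  have h := phim_rel k n γ (FinQuiver.PPRelGam.unit)
  rw [map_sum, map_one] at h
  exact h

lemma phim_comp (b : (cycleQuiver n).DE) :
    phim k n γ ((cycleQuiver n).aF k b)
      = phim k n γ ((cycleQuiver n).eF k ((cycleQuiver n).dhd b))
        * phim k n γ ((cycleQuiver n).aF k b)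
        * phim k n γ ((cycleQuiver n).eF k ((cycleQuiver n).dtl b)) := by
  have h := phim_rel k n γ (FinQuiver.PPRelGam.comp b)
  rw [map_mul, map_mul] at h
  exact h

lemma phim_ea (i : (cycleQuiver n).I) (b : (cycleQuiver n).DE) :
    phim k n γ ((cycleQuiver n).eF k i) * phim k n γ ((cycleQuiver n).aF k b)
      = if (cycleQuiver n).dhd b = i then phim k n γ ((cycleQuiver n).aF k b) else 0 := by
  have hcomp := phim_comp k n γ b
  by_cases h : (cycleQuiver n).dhd b = i
  · subst h
    rw [if_pos rfl]
    nth_rewrite 1 [hcomp]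
    rw [← mul_assoc, ← mul_assoc, phim_ee, if_pos rfl]
    exact hcomp.symm
  · rw [if_neg h]
    nth_rewrite 1 [hcomp]
    rw [← mul_assoc, ← mul_assoc, phim_ee, if_neg (fun hh => h hh.symm), zero_mul, zero_mul]

lemma phim_ae (b : (cycleQuiver n).DE) (j : (cycleQuiver n).I) :
    phim k n γ ((cycleQuiver n).aF k b) * phim k n γ ((cycleQuiver n).eF k j)
      = if (cycleQuiver n).dtl b = j then phim k n γ ((cycleQuiver n).aF k b) else 0 := by
  have hcomp := phim_comp k n γ b
  by_cases h : (cycleQuiver n).dtl b = j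
  · subst h
    rw [if_pos rfl]
    nth_rewrite 1 [hcomp]
    rw [mul_assoc, phim_ee, if_pos rfl]
    exact hcomp.symm
  · rw [if_neg h]
    nth_rewrite 1 [hcomp]
    rw [mul_assoc, phim_ee, if_neg h, mul_zero]

lemma wordF_nil : (cycleQuiver n).wordF k ([] : List ((cycleQuiver n).DE)) = 1 := rfl

lemma wordF_cons (b : (cycleQuiver n).DE) (l : List ((cycleQuiver n).DE)) :
    (cycleQuiver n).wordF k (b :: l) = (cycleQuiver n).aF k b * (cycleQuiver n).wordF k l := by
  simp [FinQuiver.wordF]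

lemma wordF_append (l₁ l₂ : List ((cycleQuiver n).DE)) :
    (cycleQuiver n).wordF k (l₁ ++ l₂)
      = (cycleQuiver n).wordF k l₁ * (cycleQuiver n).wordF k l₂ := by
  simp [FinQuiver.wordF]

lemma phim_kill : ∀ (l : List ((cycleQuiver n).DE)) (i j : (cycleQuiver n).I),
    ¬ (pathB n i j l = true) →
    phim k n γ ((cycleQuiver n).eF k i * (cycleQuiver n).wordF k l * (cycleQuiver n).eF k j)
      = 0 := by
  intro l
  induction l with
  | nil =>
    intro i j h
    change ¬ (decide ((i : Fin n) = j) = true) at h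
    rw [wordF_nil, mul_one, map_mul, phim_ee, if_neg (by simpa using h)]
  | cons b t ih =>
    intro i j h
    change ¬ (decide ((cycleQuiver n).dhd b = i) && pathB n ((cycleQuiver n).dtl b) j t) = true at h
    rw [Bool.and_eq_true, decide_eq_true_iff] at h
    push_neg at h
    rw [wordF_cons, show (cycleQuiver n).eF k i * ((cycleQuiver n).aF k b
        * (cycleQuiver n).wordF k t) * (cycleQuiver n).eF k j
      = ((cycleQuiver n).eF k i * (cycleQuiver n).aF k b)
        * ((cycleQuiver n).wordF k t * (cycleQuiver n).eF k j) by noncomm_ring,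
      map_mul, map_mul, phim_ea]
    by_cases hb : (cycleQuiver n).dhd b = i
    · rw [if_pos hb]
      have ht := h hb
      nth_rewrite 1 [phim_comp k n γ b]
      rw [mul_assoc, mul_assoc,
        show phim k n γ ((cycleQuiver n).eF k ((cycleQuiver n).dtl b))
            * phim k n γ ((cycleQuiver n).wordF k t * (cycleQuiver n).eF k j)
          = phim k n γ ((cycleQuiver n).eF k ((cycleQuiver n).dtl b)
            * ((cycleQuiver n).wordF k t * (cycleQuiver n).eF k j)) from (map_mul _ _ _).symm,
        show (cycleQuiver n).eF k ((cycleQuiver n).dtl b)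
            * ((cycleQuiver n).wordF k t * (cycleQuiver n).eF k j)
          = (cycleQuiver n).eF k ((cycleQuiver n).dtl b)
            * (cycleQuiver n).wordF k t * (cycleQuiver n).eF k j from (mul_assoc _ _ _).symm,
        ih _ _ ht, mul_zero, mul_zero]
    · rw [if_neg hb, zero_mul]

/-- The preprojective relation at vertex `i` in the cyclic quiver, in collapsed form. -/
lemma phim_pair (i : Fin n) :
    phim k n γ ((cycleQuiver n).aF k (Sum.inr i) * (cycleQuiver n).aF k (Sum.inl i))
      = (((γ (Sum.inr i) : k)⁻¹ * (γ (Sum.inl (i-1)) : k)) •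
          phim k n γ ((cycleQuiver n).aF k (Sum.inl (i-1))
            * (cycleQuiver n).aF k (Sum.inr (i-1)))) := by
  have h := phim_rel k n γ (FinQuiver.PPRelGam.pre i (Set.notMem_empty i))
  rw [map_zero] at h
  delta FinQuiver.preprojectorGam at h
  letI U1 : Unique {a : (cycleQuiver n).E // (cycleQuiver n).hd a = i} :=
    { default := ⟨(i - 1 : Fin n), show ((i : Fin n) - 1 + 1 : Fin n) = i from
        sub_add_cancel i 1⟩
      uniq := fun a => Subtype.ext
        ((show ∀ x : Fin n, x + 1 = i → x = i - 1 from
          fun _ h => eq_sub_of_add_eq h) a.1 a.2) }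
  letI U2 : Unique {a : (cycleQuiver n).E // (cycleQuiver n).tl a = i} :=
    { default := ⟨i, rfl⟩
      uniq := fun a => Subtype.ext a.2 }
  rw [Fintype.sum_unique, Fintype.sum_unique, map_sub, map_smul, map_smul] at h
  have h' : ((γ (Sum.inl (i-1)) : k)) • phim k n γ ((cycleQuiver n).aF k (Sum.inl (i-1))
        * (cycleQuiver n).aF k (Sum.inr (i-1)))
      = ((γ (Sum.inr i) : k)) • phim k n γ ((cycleQuiver n).aF k (Sum.inr i)
        * (cycleQuiver n).aF k (Sum.inl i)) := sub_eq_zero.mp h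
  have hne : ((γ (Sum.inr i) : k)) ≠ 0 := Units.ne_zero _
  calc phim k n γ ((cycleQuiver n).aF k (Sum.inr i) * (cycleQuiver n).aF k (Sum.inl i))
      = (γ (Sum.inr i) : k)⁻¹ • ((γ (Sum.inr i) : k) •
          phim k n γ ((cycleQuiver n).aF k (Sum.inr i) * (cycleQuiver n).aF k (Sum.inl i))) := by
        rw [smul_smul, inv_mul_cancel₀ hne, one_smul]
    _ = (γ (Sum.inr i) : k)⁻¹ • ((γ (Sum.inl (i-1)) : k) •
          phim k n γ ((cycleQuiver n).aF k (Sum.inl (i-1))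
            * (cycleQuiver n).aF k (Sum.inr (i-1)))) := by rw [h']
    _ = _ := by rw [smul_smul]

lemma phim_rw (i j : (cycleQuiver n).I) (m : Fin n) (p s : List (Fin n ⊕ Fin n)) :
    phim k n γ ((cycleQuiver n).eF k i
        * (cycleQuiver n).wordF k (p ++ Sum.inr m :: Sum.inl m :: s) * (cycleQuiver n).eF k j)
      = ((γ (Sum.inr m) : k)⁻¹ * (γ (Sum.inl (m-1)) : k)) •
        phim k n γ ((cycleQuiver n).eF k i
          * (cycleQuiver n).wordF k (p ++ Sum.inl (m-1) :: Sum.inr (m-1) :: s)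
          * (cycleQuiver n).eF k j) := by
  have h1 : (cycleQuiver n).eF k i * (cycleQuiver n).wordF k (p ++ Sum.inr m :: Sum.inl m :: s)
        * (cycleQuiver n).eF k j
      = ((cycleQuiver n).eF k i * (cycleQuiver n).wordF k p)
        * ((cycleQuiver n).aF k (Sum.inr m) * (cycleQuiver n).aF k (Sum.inl m))
        * ((cycleQuiver n).wordF k s * (cycleQuiver n).eF k j) := by
    erw [wordF_append, wordF_cons, wordF_cons]
    noncomm_ring
  have h2 : (cycleQuiver n).eF k i
        * (cycleQuiver n).wordF k (p ++ Sum.inl (m-1) :: Sum.inr (m-1) :: s)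
        * (cycleQuiver n).eF k j
      = ((cycleQuiver n).eF k i * (cycleQuiver n).wordF k p)
        * ((cycleQuiver n).aF k (Sum.inl (m-1)) * (cycleQuiver n).aF k (Sum.inr (m-1)))
        * ((cycleQuiver n).wordF k s * (cycleQuiver n).eF k j) := by
    erw [wordF_append, wordF_cons, wordF_cons]
    simp only [mul_assoc]
    rfl
  rw [h1, h2, map_mul, map_mul, phim_pair k n γ m, mul_smul_comm, smul_mul_assoc]
  congr 1
  simp only [map_mul, mul_assoc]

/-- The set of images of no-star-step valid paths of length `d` from `j` to `i`. -/
def sset (d : ℕ) (i j : (cycleQuiver n).I) :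
    Set ((cycleQuiver n).PPAGam k ∅ (fun b => γ b.1)) :=
  {x | ∃ l : List ((cycleQuiver n).DE), l.length = d ∧ nsB n l = true ∧ pathB n i j l = true ∧
    x = phim k n γ ((cycleQuiver n).eF k i * (cycleQuiver n).wordF k l * (cycleQuiver n).eF k j)}

lemma mem_key : ∀ (N : ℕ) (l : List ((cycleQuiver n).DE)) (i j : (cycleQuiver n).I),
    mu n l ≤ N →
    phim k n γ ((cycleQuiver n).eF k i * (cycleQuiver n).wordF k l * (cycleQuiver n).eF k j)
      ∈ Submodule.span k (sset k n γ l.length i j) := by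
  intro N
  induction N using Nat.strong_induction_on with
  | _ N IH =>
    intro l i j hmu
    by_cases hns : nsB n l = true
    · by_cases hp : pathB n i j l = true
      · exact Submodule.subset_span ⟨l, rfl, hns, hp, rfl⟩
      · rw [phim_kill k n γ l i j hp]
        exact Submodule.zero_mem _
    · obtain ⟨p, m, s, rfl⟩ := decomp n l hns
      rw [phim_rw]
      have hlt := mu_lt n p s m (m - 1)
      have hlen : (p ++ Sum.inl (m-1) :: Sum.inr (m-1) :: s).length
          = (p ++ Sum.inr m :: Sum.inl m :: s).length := by simp
      have hN : mu n (p ++ Sum.inl (m-1) :: Sum.inr (m-1) :: s) < N :=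
        lt_of_lt_of_le hlt hmu
      have hmem := IH _ hN (p ++ Sum.inl (m-1) :: Sum.inr (m-1) :: s) i j le_rfl
      erw [hlen] at hmem
      exact Submodule.smul_mem _ _ hmem

/-- Span of the images of all paths. -/
def Mspan : Submodule k ((cycleQuiver n).PPAGam k ∅ (fun b => γ b.1)) :=
  Submodule.span k
    {x | ∃ (i j : (cycleQuiver n).I) (l : List ((cycleQuiver n).DE)),
      x = phim k n γ ((cycleQuiver n).eF k i * (cycleQuiver n).wordF k l
        * (cycleQuiver n).eF k j)}

lemma phim_e_mem (i : (cycleQuiver n).I) : phim k n γ ((cycleQuiver n).eF k i) ∈ Mspan k n γ := by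
  refine Submodule.subset_span ⟨i, i, [], ?_⟩
  rw [wordF_nil, mul_one, map_mul, phim_ee, if_pos rfl]

lemma one_mem_Mspan : (1 : (cycleQuiver n).PPAGam k ∅ (fun b => γ b.1)) ∈ Mspan k n γ := by
  rw [← phim_sum_e k n γ]
  exact Submodule.sum_mem _ fun i _ => phim_e_mem k n γ i

lemma gen_mul_e (p q : (cycleQuiver n).I) (l : List ((cycleQuiver n).DE))
    (i : (cycleQuiver n).I) :
    phim k n γ ((cycleQuiver n).eF k p * (cycleQuiver n).wordF k l * (cycleQuiver n).eF k q)
      * phim k n γ ((cycleQuiver n).eF k i) ∈ Mspan k n γ := by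
  rw [map_mul, mul_assoc, phim_ee]
  by_cases h : q = i
  · rw [if_pos h, ← map_mul]
    exact Submodule.subset_span ⟨p, q, l, rfl⟩
  · rw [if_neg h, mul_zero]
    exact Submodule.zero_mem _

lemma gen_mul_a (p q : (cycleQuiver n).I) (l : List ((cycleQuiver n).DE))
    (b : (cycleQuiver n).DE) :
    phim k n γ ((cycleQuiver n).eF k p * (cycleQuiver n).wordF k l * (cycleQuiver n).eF k q)
      * phim k n γ ((cycleQuiver n).aF k b) ∈ Mspan k n γ := by
  rw [map_mul, mul_assoc, phim_ea]
  by_cases h : (cycleQuiver n).dhd b = q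
  · rw [if_pos h]
    have e2 : phim k n γ ((cycleQuiver n).aF k b)
        = phim k n γ ((cycleQuiver n).aF k b)
          * phim k n γ ((cycleQuiver n).eF k ((cycleQuiver n).dtl b)) := by
      rw [phim_ae, if_pos rfl]
    rw [e2, ← mul_assoc, ← map_mul, ← map_mul,
      show (cycleQuiver n).eF k p * (cycleQuiver n).wordF k l * (cycleQuiver n).aF k b
          * (cycleQuiver n).eF k ((cycleQuiver n).dtl b)
        = (cycleQuiver n).eF k p * (cycleQuiver n).wordF k (l ++ [b])
          * (cycleQuiver n).eF k ((cycleQuiver n).dtl b) by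
        rw [wordF_append, wordF_cons, wordF_nil]; noncomm_ring]
    exact Submodule.subset_span ⟨p, (cycleQuiver n).dtl b, l ++ [b], rfl⟩
  · rw [if_neg h, mul_zero]
    exact Submodule.zero_mem _

lemma mem_mul_e (x : (cycleQuiver n).PPAGam k ∅ (fun b => γ b.1)) (hx : x ∈ Mspan k n γ)
    (i : (cycleQuiver n).I) : x * phim k n γ ((cycleQuiver n).eF k i) ∈ Mspan k n γ := by
  refine Submodule.span_induction
    (p := fun y _ => y * phim k n γ ((cycleQuiver n).eF k i) ∈ Mspan k n γ)
    ?_ ?_ ?_ ?_ hx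
  · rintro x ⟨p, q, l, rfl⟩
    exact gen_mul_e k n γ p q l i
  · simpa using Submodule.zero_mem (Mspan k n γ)
  · intro a b _ _ ha hb
    simpa [add_mul] using Submodule.add_mem _ ha hb
  · intro c a _ ha
    simpa [smul_mul_assoc] using Submodule.smul_mem _ c ha

lemma mem_mul_a (x : (cycleQuiver n).PPAGam k ∅ (fun b => γ b.1)) (hx : x ∈ Mspan k n γ)
    (b : (cycleQuiver n).DE) : x * phim k n γ ((cycleQuiver n).aF k b) ∈ Mspan k n γ := by
  refine Submodule.span_induction
    (p := fun y _ => y * phim k n γ ((cycleQuiver n).aF k b) ∈ Mspan k n γ)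
    ?_ ?_ ?_ ?_ hx
  · rintro x ⟨p, q, l, rfl⟩
    exact gen_mul_a k n γ p q l b
  · simpa using Submodule.zero_mem (Mspan k n γ)
  · intro a c _ _ ha hc
    simpa [add_mul] using Submodule.add_mem _ ha hc
  · intro c a _ ha
    simpa [smul_mul_assoc] using Submodule.smul_mem _ c ha

lemma mem_mul_phim (x : (cycleQuiver n).FA k) :
    ∀ y ∈ Mspan k n γ, y * phim k n γ x ∈ Mspan k n γ := by
  induction x using FreeAlgebra.induction with
  | grade0 r =>
    intro y hy
    rw [AlgHom.commutes, Algebra.algebraMap_eq_smul_one, mul_smul_comm, mul_one]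
    exact Submodule.smul_mem _ _ hy
  | grade1 g =>
    rcases g with i | b
    · intro y hy
      exact mem_mul_e k n γ y hy i
    · intro y hy
      exact mem_mul_a k n γ y hy b
  | mul a b ha hb =>
    intro y hy
    rw [map_mul, ← mul_assoc]
    exact hb _ (ha _ hy)
  | add a b ha hb =>
    intro y hy
    rw [map_add, mul_add]
    exact Submodule.add_mem _ (ha _ hy) (hb _ hy)

lemma Mspan_top : Mspan k n γ = ⊤ := by
  rw [Submodule.eq_top_iff']
  intro x
  obtain ⟨z, rfl⟩ := RingQuot.mkAlgHom_surjective k _ x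
  have h := mem_mul_phim k n γ z 1 (one_mem_Mspan k n γ)
  rw [one_mul] at h
  exact h

end CyclicAlg

set_option maxHeartbeats 1600000 in
/-- Let `Q` be the cyclic quiver of type `Ã_{n−1}` and `γ` any `k^×`-valued
function on the edges of the double `Q̄`. Then the modified preprojective algebra
`Π^γ_Q(k)` is spanned, as a `k`-vector space, by the paths in `Q̄` containing no
subexpression `a_i* a_i`; consequently `h_{Π^γ_Q(k)}(t) ≤ (1 − Ct + t²)⁻¹` termwise,
where `C` is the adjacency matrix of `Q̄` (the inverse series being the unique two-sided
inverse `S` of `1 − Ct + t²`). -/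
theorem cyclic_quiver_modified_preprojective_spanning_and_hilbert_bound
    (k : Type) [Field k] (n : ℕ) [NeZero n] (γ : (cycleQuiver n).DE → kˣ) :
    (Submodule.span k
        {x : (cycleQuiver n).PPAGam k ∅ (fun b => γ b.1) |
          ∃ (i j : (cycleQuiver n).I) (l : List ((cycleQuiver n).DE)), NoStarStep l ∧
            x = (cycleQuiver n).ppGamMk k ∅ (fun b => γ b.1)
              ((cycleQuiver n).eF k i * (cycleQuiver n).wordF k l * (cycleQuiver n).eF k j)}
        = ⊤) ∧
    ∀ S : PowerSeries (Matrix (cycleQuiver n).I (cycleQuiver n).I ℚ),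
      S * (1 - PowerSeries.C
              (cycleQuiver n).adjC * PowerSeries.X
            + PowerSeries.C 1
              * PowerSeries.X ^ 2) = 1 →
      (1 - PowerSeries.C
              (cycleQuiver n).adjC * PowerSeries.X
            + PowerSeries.C 1
              * PowerSeries.X ^ 2) * S = 1 →
      ∀ (d : ℕ) (i j : (cycleQuiver n).I),
        (PowerSeries.coeff d ((cycleQuiver n).ppGamHilb k ∅ (fun b => γ b.1))) i j ≤
          (PowerSeries.coeff d S) i j := by
  have hmk : (cycleQuiver n).ppGamMk k ∅ (fun b => γ b.1) = phim k n γ := rfl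
  constructor
  · refine le_antisymm le_top ?_
    rw [← Mspan_top k n γ, Mspan]
    refine Submodule.span_le.2 ?_
    rintro x ⟨i, j, l, rfl⟩
    have hmem := mem_key k n γ (mu n l) l i j le_rfl
    refine Submodule.span_mono ?_ hmem
    rintro y ⟨l', _, hns, _, rfl⟩
    exact ⟨i, j, l', (nsB_iff n l').1 hns, by rw [hmk]⟩
  · intro S hS1 hS2 d i j
    classical
    rw [coeff_eq_CntM n S hS2 d]
    rw [FinQuiver.ppGamHilb, PowerSeries.coeff_mk, Matrix.of_apply, CntM, Matrix.of_apply]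
    set G : Finset ((cycleQuiver n).PPAGam k ∅ (fun b => γ b.1)) :=
      (goodF n d none i j).image (fun l => phim k n γ
        ((cycleQuiver n).eF k i * (cycleQuiver n).wordF k l * (cycleQuiver n).eF k j)) with hG
    have hle : (cycleQuiver n).ppGamPiece k ∅ (fun b => γ b.1) d i j
        ≤ Submodule.span k (G : Set ((cycleQuiver n).PPAGam k ∅ (fun b => γ b.1))) := by
      rw [FinQuiver.ppGamPiece]
      refine Submodule.span_le.2 ?_
      rintro x ⟨l, hlen, rfl⟩
      have hmem := mem_key k n γ (mu n l) l i j le_rfl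
      rw [hlen] at hmem
      rw [hmk]
      refine Submodule.span_mono ?_ hmem
      rintro y ⟨l', h1, h2, h3, rfl⟩
      refine Finset.mem_coe.2 (Finset.mem_image.2 ⟨l', ?_, rfl⟩)
      exact mem_goodF n l' d none i j h1 h3 h2 (fun m hm => by simp at hm)
    haveI hfd : FiniteDimensional k
        (Submodule.span k (G : Set ((cycleQuiver n).PPAGam k ∅ (fun b => γ b.1)))) :=
      FiniteDimensional.span_of_finite k G.finite_toSet
    have h1 : Module.finrank k ((cycleQuiver n).ppGamPiece k ∅ (fun b => γ b.1) d i j)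
        ≤ Module.finrank k
          (Submodule.span k (G : Set ((cycleQuiver n).PPAGam k ∅ (fun b => γ b.1)))) :=
      Submodule.finrank_mono hle
    have h2 : Module.finrank k
          (Submodule.span k (G : Set ((cycleQuiver n).PPAGam k ∅ (fun b => γ b.1))))
        ≤ G.card :=
      finrank_span_finset_le_card G
    have h3 : G.card ≤ (goodF n d none i j).card := Finset.card_image_le
    have := (h1.trans h2).trans h3
    exact_mod_cast this

end
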